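/- Fix R > 0 and define, for a continuously differentiable function x : [0,1] → ℝ, the function F_R(x) = m_R(x)·x² where m_R(x) = 1 if ‖x‖_{L⁴} ≤ R and m_R(x) = R²/‖x‖²_{L⁴} if ‖x‖_{L⁴} ≥ R. Then there exists a constant c_R > 0 such that for all twice continuously differentiable functions x, y : [0,1] → ℝ with x(0) = x(1) = y(0) = y(1) = 0 one has ∫₀¹ (x''(ξ) − y''(ξ))·(x(ξ) − y(ξ)) dξ + ∫₀¹ (d/dξ)(F_R(x)(ξ) − F_R(y)(ξ))·(x(ξ) − y(ξ)) dξ ≤ −(π²/4)·∫₀¹ (x(ξ) − y(ξ))² dξ + c_R·(∫₀¹ (x(ξ) − y(ξ))² dξ)^{1/2}. -/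

import Mathlib

open MeasureTheory intervalIntegral
open Set


lemma aux_memLp {f : ℝ → ℝ} {a b : ℝ} (hf : ContinuousOn f (Icc a b)) (p : ENNReal) :
    MemLp f p (volume.restrict (Ioc a b)) := by
  haveI : IsFiniteMeasure (volume.restrict (Ioc a b)) :=
    ⟨by simp [Measure.restrict_apply_univ]⟩
  have hm : AEStronglyMeasurable f (volume.restrict (Ioc a b)) :=
    (hf.mono Ioc_subset_Icc_self).aestronglyMeasurable measurableSet_Ioc
  obtain ⟨C, hC⟩ := isCompact_Icc.exists_bound_of_continuousOn hf
  refine MemLp.of_bound hm C ?_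
  refine (ae_restrict_iff' measurableSet_Ioc).2 (ae_of_all _ fun t ht => ?_)
  exact hC t (Ioc_subset_Icc_self ht)

lemma holder_ab {f g : ℝ → ℝ} {a b : ℝ} (hab : a ≤ b) {p q : ℝ} (hpq : p.HolderConjugate q)
    (hf : ContinuousOn f (Icc a b)) (hg : ContinuousOn g (Icc a b))
    (hf0 : ∀ t ∈ Icc a b, 0 ≤ f t) (hg0 : ∀ t ∈ Icc a b, 0 ≤ g t) :
    ∫ t in a..b, f t * g t ≤
      (∫ t in a..b, f t ^ p) ^ (1/p) * (∫ t in a..b, g t ^ q) ^ (1/q) := by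
  rw [integral_of_le hab, integral_of_le hab, integral_of_le hab]
  refine MeasureTheory.integral_mul_le_Lp_mul_Lq_of_nonneg hpq ?_ ?_ (aux_memLp hf _) (aux_memLp hg _)
  · exact (ae_restrict_iff' measurableSet_Ioc).2 (ae_of_all _ fun t ht => hf0 t (Ioc_subset_Icc_self ht))
  · exact (ae_restrict_iff' measurableSet_Ioc).2 (ae_of_all _ fun t ht => hg0 t (Ioc_subset_Icc_self ht))

lemma rpow_two_abs (z : ℝ) : |z| ^ (2:ℝ) = z ^ 2 := by
  rw [show (2:ℝ) = ((2:ℕ):ℝ) by norm_num, Real.rpow_natCast, sq_abs]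

lemma cs_ab {f g : ℝ → ℝ} {a b : ℝ} (hab : a ≤ b)
    (hf : ContinuousOn f (Icc a b)) (hg : ContinuousOn g (Icc a b)) :
    ∫ t in a..b, f t * g t ≤
      Real.sqrt (∫ t in a..b, f t ^ 2) * Real.sqrt (∫ t in a..b, g t ^ 2) := by
  have h2 : (2:ℝ).HolderConjugate 2 := Real.holderConjugate_iff.2 ⟨one_lt_two, by norm_num⟩
  have key := holder_ab hab h2 hf.abs hg.abs
    (fun t _ => abs_nonneg _) (fun t _ => abs_nonneg _)
  have e1 : (∫ t in a..b, |f t| ^ (2:ℝ)) = ∫ t in a..b, f t ^ 2 :=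
    integral_congr fun t _ => rpow_two_abs _
  have e2 : (∫ t in a..b, |g t| ^ (2:ℝ)) = ∫ t in a..b, g t ^ 2 :=
    integral_congr fun t _ => rpow_two_abs _
  rw [e1, e2] at key
  have hfg : ∫ t in a..b, f t * g t ≤ ∫ t in a..b, |f t| * |g t| := by
    refine integral_mono_on hab ?_ ?_ fun t ht => ?_
    · exact ((hf.mul hg).mono (by rw [uIcc_of_le hab])).intervalIntegrable
    · exact ((hf.abs.mul hg.abs).mono (by rw [uIcc_of_le hab])).intervalIntegrable
    · calc f t * g t ≤ |f t * g t| := le_abs_self _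
        _ = |f t| * |g t| := abs_mul _ _
  refine hfg.trans (key.trans (le_of_eq ?_))
  rw [Real.sqrt_eq_rpow, Real.sqrt_eq_rpow]

lemma II01 {f : ℝ → ℝ} (hf : ContinuousOn f (Icc 0 1)) :
    IntervalIntegrable f volume 0 1 :=
  (hf.mono (by rw [uIcc_of_le (zero_le_one : (0:ℝ) ≤ 1)])).intervalIntegrable

lemma pow4_add (a b : ℝ) : (a+b)^4 ≤ 8*(a^4+b^4) := by
  nlinarith [sq_nonneg (a-b), sq_nonneg (a+b), sq_nonneg (a^2-b^2), sq_nonneg (a^2+b^2),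
    sq_nonneg ((a+b)^2 - 2*(a^2+b^2))]

lemma pow4_diff (a b : ℝ) : a^4 - b^4 ≤ |a - b| * (|a| + |b|)^3 := by
  have h2 : a^4 - b^4 ≤ |a-b| * |a^3+a^2*b+a*b^2+b^3| := by
    rw [← abs_mul]
    calc a^4 - b^4 = (a-b)*(a^3+a^2*b+a*b^2+b^3) := by ring
      _ ≤ |(a-b)*(a^3+a^2*b+a*b^2+b^3)| := le_abs_self _
  have h3 : |a^3+a^2*b+a*b^2+b^3| ≤ (|a| + |b|)^3 := by
    have i1 := abs_add_le (a^3+a^2*b+a*b^2) (b^3)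
    have i2 := abs_add_le (a^3+a^2*b) (a*b^2)
    have i3 := abs_add_le (a^3) (a^2*b)
    have ha := abs_nonneg a
    have hb := abs_nonneg b
    have e1 : |a^3| = |a|^3 := abs_pow a 3
    have e2 : |b^3| = |b|^3 := abs_pow b 3
    have e3 : |a^2*b| = |a|^2 * |b| := by rw [abs_mul, abs_pow]
    have e4 : |a*b^2| = |a| * |b|^2 := by rw [abs_mul, abs_pow]
    nlinarith [mul_nonneg (mul_nonneg ha ha) hb, mul_nonneg (mul_nonneg ha hb) hb]
  calc a^4 - b^4 ≤ |a-b| * |a^3+a^2*b+a*b^2+b^3| := h2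
    _ ≤ |a-b| * (|a| + |b|)^3 := mul_le_mul_of_nonneg_left h3 (abs_nonneg _)

lemma Bbound {R a b w : ℝ} (hR : 0 < R) (hb : 0 ≤ b) (hba : b ≤ a) (hw : 0 ≤ w)
    (hkey : a^4 - b^4 ≤ 8*a^3*w) :
    |(if a ≤ R then (1:ℝ) else R^2/a^2) - (if b ≤ R then 1 else R^2/b^2)| * b^2 ≤ 8*(R*w) := by
  have hb2 : b^2 ≤ a^2 := by nlinarith
  by_cases haR : a ≤ R
  · have hbR : b ≤ R := hba.trans haR
    simp only [if_pos haR, if_pos hbR, sub_self, abs_zero, zero_mul]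
    positivity
  · push_neg at haR
    have ha0 : 0 < a := hR.trans haR
    have h1 : a^2*(a^2-b^2) ≤ 8*a^3*w := by
      nlinarith [mul_nonneg (sq_nonneg b) (sub_nonneg.2 hb2)]
    have h2 : a^2-b^2 ≤ 8*a*w := by
      have h8 : 8*a^3*w = a^2*(8*a*w) := by ring
      rw [h8] at h1
      exact (mul_le_mul_iff_right₀ (by positivity)).1 h1
    have hmain : R^2*(a^2-b^2) ≤ 8*(R*w)*a^2 := by
      nlinarith [mul_le_mul_of_nonneg_left h2 (sq_nonneg R),
        mul_nonneg (mul_nonneg (mul_nonneg (by norm_num : (0:ℝ) ≤ 8) hw) hR.le)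
          (mul_nonneg (sub_nonneg.2 haR.le) ha0.le)]
    by_cases hbR : b ≤ R
    · simp only [if_neg (not_le.2 haR), if_pos hbR]
      have hra : R^2/a^2 ≤ 1 := by
        rw [div_le_one (by positivity)]; nlinarith
      rw [abs_of_nonpos (by linarith)]
      have e : -(R^2/a^2 - 1) * b^2 = (a^2 - R^2)*b^2 / a^2 := by
        field_simp; try ring
      rw [e, div_le_iff₀ (by positivity : (0:ℝ) < a^2)]
      have hbR2 : b^2 ≤ R^2 := by nlinarith
      nlinarith [mul_le_mul_of_nonneg_left hbR2 (sq_nonneg a)]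
    · push_neg at hbR
      have hb0 : 0 < b := hR.trans hbR
      simp only [if_neg (not_le.2 haR), if_neg (not_le.2 hbR)]
      have hdiv : R^2/a^2 ≤ R^2/b^2 := by
        apply div_le_div_of_nonneg_left (sq_nonneg R) (by positivity) hb2
      rw [abs_of_nonpos (by linarith)]
      have e : -(R^2/a^2 - R^2/b^2) * b^2 = R^2*(a^2-b^2) / a^2 := by
        field_simp; try ring
      rw [e, div_le_iff₀ (by positivity : (0:ℝ) < a^2)]
      exact hmain

lemma rpow_fourth (A : ℝ) (hA : 0 ≤ A) : (A ^ ((1:ℝ)/4)) ^ 4 = A := by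
  rw [← Real.rpow_natCast (A ^ ((1:ℝ)/4)) 4, ← Real.rpow_mul hA]
  norm_num

lemma cube_rpow (A : ℝ) (hA : 0 ≤ A) : (A^3) ^ ((4:ℝ)/3) = A^4 := by
  rw [← Real.rpow_natCast A 3, ← Real.rpow_mul hA, ← Real.rpow_natCast A 4]
  norm_num

lemma quad_rpow (A : ℝ) (hA : 0 ≤ A) : (A^4) ^ ((3:ℝ)/4) = A^3 := by
  rw [← Real.rpow_natCast A 4, ← Real.rpow_mul hA, ← Real.rpow_natCast A 3]
  norm_num

lemma abs_rpow_four (z : ℝ) : |z| ^ (4:ℝ) = z ^ 4 := by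
  rw [show (4:ℝ) = ((4:ℕ):ℝ) by norm_num, Real.rpow_natCast, ← abs_pow, abs_of_nonneg (by positivity)]

lemma cutoff_nonneg {R N : ℝ} (hR : 0 < R) : (0:ℝ) ≤ (if N ≤ R then 1 else R^2/N^2) := by
  split_ifs with h
  · norm_num
  · positivity

lemma cutoff_mul_sq {R N : ℝ} (hR : 0 < R) (hN : 0 ≤ N) :
    (if N ≤ R then (1:ℝ) else R^2/N^2) * N^2 ≤ R^2 := by
  split_ifs with h
  · rw [one_mul]
    exact pow_le_pow_left₀ hN h 2
  · push_neg at h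
    rw [div_mul_cancel₀ _ (pow_ne_zero 2 (ne_of_gt (hR.trans h)))]

lemma cutoff_mul {R N : ℝ} (hR : 0 < R) (hN : 0 ≤ N) :
    (if N ≤ R then (1:ℝ) else R^2/N^2) * N ≤ R := by
  split_ifs with h
  · rw [one_mul]; exact h
  · push_neg at h
    have h0 : 0 < N := hR.trans h
    rw [div_mul_eq_mul_div, div_le_iff₀ (by positivity)]
    nlinarith [mul_nonneg (mul_nonneg hR.le h0.le) (sub_nonneg.2 h.le)]

lemma pisq_lt : Real.pi ^ 2 < 10 := by
  nlinarith [Real.pi_lt_d2, Real.pi_pos]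

lemma final_small {R s m w : ℝ} (hR : 0 < R) (hs0 : 0 ≤ s) (hm0 : 0 ≤ m) (hw0 : 0 ≤ w)
    (hw2sm : w^2 ≤ s*m) (hm1 : m ≤ 1) :
    -s^2 + (2*R*(s*w) + 8*(R*w)*s) ≤ -(Real.pi^2/4)*m^2 + (5004*R^4+4)*m := by
  nlinarith [sq_nonneg (s - 10*R*w), sq_nonneg (s - 100*R^2*m),
    mul_le_mul_of_nonneg_left hw2sm (by positivity : (0:ℝ) ≤ 50*R^2),
    mul_nonneg hm0 (sub_nonneg.2 hm1),
    mul_le_mul_of_nonneg_right pisq_lt.le (sq_nonneg m),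
    pow_pos hR 4]

lemma final_big {R s m : ℝ} (hR : 0 < R) (hs0 : 0 ≤ s) (hm0 : 0 ≤ m)
    (h4M : 4*m^2 ≤ s^2) (hm1 : 1 ≤ m) :
    -s^2 + 2*R^2*s ≤ -(Real.pi^2/4)*m^2 + (5004*R^4+4)*m := by
  nlinarith [sq_nonneg (s - 4*R^2),
    mul_le_mul_of_nonneg_right pisq_lt.le (sq_nonneg m),
    mul_nonneg hm0 (sub_nonneg.2 hm1),
    mul_nonneg (by positivity : (0:ℝ) ≤ 5004*R^4+4) (sub_nonneg.2 hm1),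
    pow_pos hR 4]

lemma sq_le_of_sq_sq {w c : ℝ} (hw : 0 ≤ w) (hc : 0 ≤ c) (h : (w^2)^2 ≤ c^2) : w^2 ≤ c := by
  nlinarith [sq_nonneg w, sq_nonneg (w^2 - c), sq_nonneg (w^2 + c)]


set_option maxHeartbeats 2000000 in
lemma key (R : ℝ) (hR : 0 < R)
    (nL4 : (ℝ → ℝ) → ℝ)
    (hnL4 : ∀ x : ℝ → ℝ, nL4 x = (∫ ξ in (0:ℝ)..1, x ξ ^ 4) ^ ((1:ℝ)/4))
    (mR : (ℝ → ℝ) → ℝ)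
    (hmR : ∀ x : ℝ → ℝ, mR x = if nL4 x ≤ R then 1 else R ^ 2 / nL4 x ^ 2)
    (x y x' y' x'' y'' : ℝ → ℝ)
    (hx : ∀ ξ ∈ Icc (0:ℝ) 1, HasDerivAt x (x' ξ) ξ)
    (hx' : ∀ ξ ∈ Icc (0:ℝ) 1, HasDerivAt x' (x'' ξ) ξ)
    (hy : ∀ ξ ∈ Icc (0:ℝ) 1, HasDerivAt y (y' ξ) ξ)
    (hy' : ∀ ξ ∈ Icc (0:ℝ) 1, HasDerivAt y' (y'' ξ) ξ)
    (hx'' : ContinuousOn x'' (Icc (0:ℝ) 1)) (hy'' : ContinuousOn y'' (Icc (0:ℝ) 1))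
    (hx0 : x 0 = 0) (hx1 : x 1 = 0) (hy0 : y 0 = 0) (hy1 : y 1 = 0)
    (hNle : nL4 y ≤ nL4 x) :
    (∫ ξ in (0:ℝ)..1, (x'' ξ - y'' ξ) * (x ξ - y ξ)) +
      (∫ ξ in (0:ℝ)..1,
        (deriv (fun t => mR x * x t ^ 2) ξ - deriv (fun t => mR y * y t ^ 2) ξ) *
          (x ξ - y ξ)) ≤
    -(Real.pi ^ 2 / 4) * (∫ ξ in (0:ℝ)..1, (x ξ - y ξ) ^ 2) +
      (5004*R^4+4) * (∫ ξ in (0:ℝ)..1, (x ξ - y ξ) ^ 2) ^ ((1:ℝ)/2) := by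
  have uIccE : uIcc (0:ℝ) 1 = Icc 0 1 := uIcc_of_le zero_le_one
  have cx : ContinuousOn x (Icc (0:ℝ) 1) := fun ξ hξ => (hx ξ hξ).continuousAt.continuousWithinAt
  have cx' : ContinuousOn x' (Icc (0:ℝ) 1) := fun ξ hξ => (hx' ξ hξ).continuousAt.continuousWithinAt
  have cy : ContinuousOn y (Icc (0:ℝ) 1) := fun ξ hξ => (hy ξ hξ).continuousAt.continuousWithinAt
  have cy' : ContinuousOn y' (Icc (0:ℝ) 1) := fun ξ hξ => (hy' ξ hξ).continuousAt.continuousWithinAt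
  have cu : ContinuousOn (fun t => x t - y t) (Icc (0:ℝ) 1) := cx.sub cy
  have cu' : ContinuousOn (fun t => x' t - y' t) (Icc (0:ℝ) 1) := cx'.sub cy'
  set S : ℝ := ∫ t in (0:ℝ)..1, (x' t - y' t)^2 with hSdef
  set M : ℝ := ∫ t in (0:ℝ)..1, (x t - y t)^2 with hMdef
  set W4 : ℝ := ∫ t in (0:ℝ)..1, (x t - y t)^4 with hW4def
  have hS0 : 0 ≤ S := intervalIntegral.integral_nonneg zero_le_one (fun t _ => sq_nonneg _)
  have hM0 : 0 ≤ M := intervalIntegral.integral_nonneg zero_le_one (fun t _ => sq_nonneg _)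
  have hW0 : 0 ≤ W4 := intervalIntegral.integral_nonneg zero_le_one (fun t _ => by positivity)
  set s : ℝ := Real.sqrt S with hsdef
  set m : ℝ := Real.sqrt M with hmdef
  set w : ℝ := W4 ^ ((1:ℝ)/4) with hwdef
  have hs0 : 0 ≤ s := Real.sqrt_nonneg _
  have hm0 : 0 ≤ m := Real.sqrt_nonneg _
  have hw0 : 0 ≤ w := Real.rpow_nonneg hW0 _
  have hs2 : s^2 = S := Real.sq_sqrt hS0
  have hm2 : m^2 = M := Real.sq_sqrt hM0
  have hw4 : w^4 = W4 := rpow_fourth _ hW0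
  clear_value S M W4 s m w
  -- Term 1 equals -S
  have eT1 : (∫ ξ in (0:ℝ)..1, (x'' ξ - y'' ξ) * (x ξ - y ξ)) = -S := by
    have hii1 : IntervalIntegrable (fun t => x' t - y' t) volume 0 1 := II01 cu'
    have hii2 : IntervalIntegrable (fun t => x'' t - y'' t) volume 0 1 := II01 (hx''.sub hy'')
    have ibp1 := integral_mul_deriv_eq_deriv_mul (a := (0:ℝ)) (b := 1)
      (u := fun t => x t - y t) (v := fun t => x' t - y' t)
      (u' := fun t => x' t - y' t) (v' := fun t => x'' t - y'' t)
      (fun t ht => (hx t (uIccE ▸ ht)).sub (hy t (uIccE ▸ ht)))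
      (fun t ht => (hx' t (uIccE ▸ ht)).sub (hy' t (uIccE ▸ ht)))
      hii1 hii2
    have c1 : (∫ ξ in (0:ℝ)..1, (x'' ξ - y'' ξ) * (x ξ - y ξ))
        = ∫ t in (0:ℝ)..1, (x t - y t) * (x'' t - y'' t) :=
      integral_congr fun t _ => by ring
    have c2 : (∫ t in (0:ℝ)..1, (x' t - y' t) * (x' t - y' t)) = S := by
      rw [hSdef]; exact integral_congr fun t _ => by ring
    rw [c1, ibp1, c2]
    simp [hx0, hx1, hy0, hy1]
  -- pointwise bounds
  have hpt : ∀ ξ ∈ Icc (0:ℝ) 1, (x ξ - y ξ)^2 ≤ ξ * S := by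
    intro ξ hξ
    have hsub : Icc (0:ℝ) ξ ⊆ Icc (0:ℝ) 1 := Icc_subset_Icc le_rfl hξ.2
    have cu'ξ : ContinuousOn (fun t => x' t - y' t) (Icc (0:ℝ) ξ) := cu'.mono hsub
    have hiiξ : IntervalIntegrable (fun t => x' t - y' t) volume 0 ξ :=
      (cu'ξ.mono (by rw [uIcc_of_le hξ.1])).intervalIntegrable
    have hFTC : (∫ t in (0:ℝ)..ξ, (x' t - y' t)) = x ξ - y ξ := by
      have h := intervalIntegral.integral_eq_sub_of_hasDerivAt
        (f := fun t => x t - y t) (f' := fun t => x' t - y' t)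
        (fun t ht => by
          rw [uIcc_of_le hξ.1] at ht
          exact (hx t (hsub ht)).sub (hy t (hsub ht)))
        hiiξ
      rw [h]; simp [hx0, hy0]
    have hQ0 : 0 ≤ ∫ t in (0:ℝ)..ξ, (x' t - y' t)^2 :=
      intervalIntegral.integral_nonneg hξ.1 (fun t _ => sq_nonneg _)
    have hQS : (∫ t in (0:ℝ)..ξ, (x' t - y' t)^2) ≤ S := by
      rw [hSdef]
      refine integral_mono_interval le_rfl hξ.1 hξ.2
        (Filter.Eventually.of_forall (fun t => sq_nonneg _)) (II01 (cu'.pow 2))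
    have hcs1 := cs_ab hξ.1 (continuousOn_const (c := (1:ℝ))) cu'ξ
    have hcs2 := cs_ab hξ.1 (continuousOn_const (c := (1:ℝ))) cu'ξ.neg
    rw [show (∫ t in (0:ℝ)..ξ, (1:ℝ) * (x' t - y' t)) = x ξ - y ξ from
      (integral_congr fun t _ => one_mul _).trans hFTC] at hcs1
    simp only [Pi.neg_apply] at hcs2
    rw [show (∫ t in (0:ℝ)..ξ, (1:ℝ) * (-(x' t - y' t))) = -(x ξ - y ξ) from by
      rw [show (∫ t in (0:ℝ)..ξ, (1:ℝ) * (-(x' t - y' t)))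
          = ∫ t in (0:ℝ)..ξ, -(x' t - y' t) from integral_congr fun t _ => one_mul _,
        intervalIntegral.integral_neg, hFTC]] at hcs2
    rw [show (∫ t in (0:ℝ)..ξ, (-(x' t - y' t))^2) = ∫ t in (0:ℝ)..ξ, (x' t - y' t)^2 from
      integral_congr fun t _ => by ring] at hcs2
    rw [show (∫ t in (0:ℝ)..ξ, ((1:ℝ))^2) = ξ from by simp] at hcs1 hcs2
    have hb0 : 0 ≤ Real.sqrt ξ * Real.sqrt (∫ t in (0:ℝ)..ξ, (x' t - y' t)^2) :=
      mul_nonneg (Real.sqrt_nonneg _) (Real.sqrt_nonneg _)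
    have hsq : (x ξ - y ξ)^2 ≤ (Real.sqrt ξ * Real.sqrt (∫ t in (0:ℝ)..ξ, (x' t - y' t)^2))^2 :=
      sq_le_sq' (by linarith) hcs1
    calc (x ξ - y ξ)^2 ≤ (Real.sqrt ξ * Real.sqrt (∫ t in (0:ℝ)..ξ, (x' t - y' t)^2))^2 := hsq
      _ = ξ * ∫ t in (0:ℝ)..ξ, (x' t - y' t)^2 := by
          rw [mul_pow, Real.sq_sqrt hξ.1, Real.sq_sqrt hQ0]
      _ ≤ ξ * S := mul_le_mul_of_nonneg_left hQS hξ.1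
  have hptr : ∀ ξ ∈ Icc (0:ℝ) 1, (x ξ - y ξ)^2 ≤ (1 - ξ) * S := by
    intro ξ hξ
    have h1ξ : 0 ≤ 1 - ξ := by linarith [hξ.2]
    have hsub : Icc ξ (1:ℝ) ⊆ Icc (0:ℝ) 1 := Icc_subset_Icc hξ.1 le_rfl
    have cu'ξ : ContinuousOn (fun t => x' t - y' t) (Icc ξ (1:ℝ)) := cu'.mono hsub
    have hiiξ : IntervalIntegrable (fun t => x' t - y' t) volume ξ 1 :=
      (cu'ξ.mono (by rw [uIcc_of_le hξ.2])).intervalIntegrable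
    have hFTC : (∫ t in ξ..(1:ℝ), (x' t - y' t)) = -(x ξ - y ξ) := by
      have h := intervalIntegral.integral_eq_sub_of_hasDerivAt
        (f := fun t => x t - y t) (f' := fun t => x' t - y' t)
        (fun t ht => by
          rw [uIcc_of_le hξ.2] at ht
          exact (hx t (hsub ht)).sub (hy t (hsub ht)))
        hiiξ
      rw [h]; simp [hx1, hy1]
    have hQ0 : 0 ≤ ∫ t in ξ..(1:ℝ), (x' t - y' t)^2 :=
      intervalIntegral.integral_nonneg hξ.2 (fun t _ => sq_nonneg _)
    have hQS : (∫ t in ξ..(1:ℝ), (x' t - y' t)^2) ≤ S := by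
      rw [hSdef]
      refine integral_mono_interval hξ.1 hξ.2 le_rfl
        (Filter.Eventually.of_forall (fun t => sq_nonneg _)) (II01 (cu'.pow 2))
    have hcs1 := cs_ab hξ.2 (continuousOn_const (c := (1:ℝ))) cu'ξ
    have hcs2 := cs_ab hξ.2 (continuousOn_const (c := (1:ℝ))) cu'ξ.neg
    rw [show (∫ t in ξ..(1:ℝ), (1:ℝ) * (x' t - y' t)) = -(x ξ - y ξ) from
      (integral_congr fun t _ => one_mul _).trans hFTC] at hcs1
    simp only [Pi.neg_apply] at hcs2
    rw [show (∫ t in ξ..(1:ℝ), (1:ℝ) * (-(x' t - y' t))) = x ξ - y ξ from by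
      rw [show (∫ t in ξ..(1:ℝ), (1:ℝ) * (-(x' t - y' t)))
          = ∫ t in ξ..(1:ℝ), -(x' t - y' t) from integral_congr fun t _ => one_mul _,
        intervalIntegral.integral_neg, hFTC]; ring] at hcs2
    rw [show (∫ t in ξ..(1:ℝ), (-(x' t - y' t))^2) = ∫ t in ξ..(1:ℝ), (x' t - y' t)^2 from
      integral_congr fun t _ => by ring] at hcs2
    rw [show (∫ t in ξ..(1:ℝ), ((1:ℝ))^2) = 1 - ξ from by simp] at hcs1 hcs2
    have hsq : (x ξ - y ξ)^2 ≤ (Real.sqrt (1-ξ) * Real.sqrt (∫ t in ξ..(1:ℝ), (x' t - y' t)^2))^2 :=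
      sq_le_sq' (by linarith) hcs2
    calc (x ξ - y ξ)^2 ≤ (Real.sqrt (1-ξ) * Real.sqrt (∫ t in ξ..(1:ℝ), (x' t - y' t)^2))^2 := hsq
      _ = (1-ξ) * ∫ t in ξ..(1:ℝ), (x' t - y' t)^2 := by
          rw [mul_pow, Real.sq_sqrt h1ξ, Real.sq_sqrt hQ0]
      _ ≤ (1-ξ) * S := mul_le_mul_of_nonneg_left hQS h1ξ
  -- Poincare
  have hMS : 4 * M ≤ S := by
    have h02 : (0:ℝ) ≤ 1/2 := by norm_num
    have h21 : (1/2:ℝ) ≤ 1 := by norm_num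
    have hiL : IntervalIntegrable (fun t => (x t - y t)^2) volume 0 (1/2) :=
      ((cu.pow 2).mono (by rw [uIcc_of_le h02]; exact Icc_subset_Icc le_rfl h21)).intervalIntegrable
    have hiR : IntervalIntegrable (fun t => (x t - y t)^2) volume (1/2) 1 :=
      ((cu.pow 2).mono (by rw [uIcc_of_le h21]; exact Icc_subset_Icc h02 le_rfl)).intervalIntegrable
    have hsplit : (∫ t in (0:ℝ)..(1/2), (x t - y t)^2) + (∫ t in (1/2:ℝ)..1, (x t - y t)^2) = M := by
      rw [hMdef]; exact integral_add_adjacent_intervals hiL hiR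
    have hL : (∫ t in (0:ℝ)..(1/2), (x t - y t)^2) ≤ ∫ t in (0:ℝ)..(1/2), t * S := by
      have hcS : IntervalIntegrable (fun t : ℝ => t * S) volume 0 (1/2) :=
        Continuous.intervalIntegrable (continuous_id'.mul continuous_const) _ _
      refine integral_mono_on h02 hiL hcS ?_
      intro t ht
      exact hpt t ⟨ht.1, ht.2.trans h21⟩
    have hLval : (∫ t in (0:ℝ)..(1/2), t * S) = S/8 := by
      rw [intervalIntegral.integral_mul_const, integral_id]; norm_num; ring
    have hRb : (∫ t in (1/2:ℝ)..1, (x t - y t)^2) ≤ ∫ t in (1/2:ℝ)..1, (1 - t) * S := by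
      refine integral_mono_on h21 hiR (Continuous.intervalIntegrable (by continuity) _ _) ?_
      intro t ht
      exact hptr t ⟨h02.trans ht.1, ht.2⟩
    have hRval : (∫ t in (1/2:ℝ)..1, (1 - t) * S) = S/8 := by
      rw [show (∫ t in (1/2:ℝ)..1, (1 - t) * S) = ∫ t in (1/2:ℝ)..1, (S - t * S) from
        integral_congr fun t _ => by ring,
        integral_sub intervalIntegrable_const
          ((by fun_prop : Continuous (fun t : ℝ => t * S)).intervalIntegrable _ _),
        intervalIntegral.integral_mul_const, integral_id, intervalIntegral.integral_const]
      norm_num; ring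
    linarith
  -- interpolation
  have hW4SM : W4 ≤ S * M := by
    have hmono : (∫ t in (0:ℝ)..1, (x t - y t)^4) ≤ ∫ t in (0:ℝ)..1, S * (x t - y t)^2 := by
      refine integral_mono_on zero_le_one (II01 (cu.pow 4))
        (II01 (continuousOn_const.mul (cu.pow 2))) ?_
      intro t ht
      have h1 : (x t - y t)^2 ≤ S :=
        calc (x t - y t)^2 ≤ t * S := hpt t ht
          _ ≤ 1 * S := mul_le_mul_of_nonneg_right ht.2 hS0
          _ = S := one_mul S
      calc (x t - y t)^4 = (x t - y t)^2 * (x t - y t)^2 := by ring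
        _ ≤ S * (x t - y t)^2 := mul_le_mul_of_nonneg_right h1 (sq_nonneg _)
    calc W4 = ∫ t in (0:ℝ)..1, (x t - y t)^4 := hW4def
      _ ≤ ∫ t in (0:ℝ)..1, S * (x t - y t)^2 := hmono
      _ = S * M := by rw [intervalIntegral.integral_const_mul, hMdef]
  have hw2sm : w^2 ≤ s * m := by
    refine sq_le_of_sq_sq hw0 (mul_nonneg hs0 hm0) ?_
    have h1 : (w^2)^2 = W4 := by rw [← hw4]; ring
    rw [h1]
    calc W4 ≤ S * M := hW4SM
      _ = (s*m)^2 := by rw [← hs2, ← hm2]; ring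
  -- L4 norms
  have hNy0 : 0 ≤ nL4 y := by
    rw [hnL4]
    exact Real.rpow_nonneg (intervalIntegral.integral_nonneg zero_le_one (fun t _ => by positivity)) _
  have hNx0 : 0 ≤ nL4 x := by
    rw [hnL4]
    exact Real.rpow_nonneg (intervalIntegral.integral_nonneg zero_le_one (fun t _ => by positivity)) _
  have hNx4 : nL4 x ^ 4 = ∫ t in (0:ℝ)..1, x t ^ 4 := by
    rw [hnL4]
    exact rpow_fourth _ (intervalIntegral.integral_nonneg zero_le_one (fun t _ => by positivity))
  have hNy4 : nL4 y ^ 4 = ∫ t in (0:ℝ)..1, y t ^ 4 := by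
    rw [hnL4]
    exact rpow_fourth _ (intervalIntegral.integral_nonneg zero_le_one (fun t _ => by positivity))
  have hmx0 : 0 ≤ mR x := by rw [hmR]; exact cutoff_nonneg hR
  have hmy0 : 0 ≤ mR y := by rw [hmR]; exact cutoff_nonneg hR
  have hmxNx2 : mR x * nL4 x ^ 2 ≤ R^2 := by rw [hmR]; exact cutoff_mul_sq hR hNx0
  have hmyNy2 : mR y * nL4 y ^ 2 ≤ R^2 := by rw [hmR]; exact cutoff_mul_sq hR hNy0
  have hmxNx : mR x * nL4 x ≤ R := by rw [hmR]; exact cutoff_mul hR hNx0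
  -- key quartic estimate
  have h16 : (∫ t in (0:ℝ)..1, (x t + y t)^4) ≤ 16 * nL4 x ^ 4 := by
    have h8 : (∫ t in (0:ℝ)..1, (x t + y t)^4) ≤ ∫ t in (0:ℝ)..1, 8 * (x t^4 + y t^4) := by
      refine integral_mono_on zero_le_one (II01 ((cx.add cy).pow 4))
        (II01 (continuousOn_const.mul ((cx.pow 4).add (cy.pow 4)))) ?_
      intro t _
      exact pow4_add _ _
    have hval : (∫ t in (0:ℝ)..1, 8 * (x t^4 + y t^4)) = 8 * (nL4 x^4 + nL4 y^4) := by
      rw [intervalIntegral.integral_const_mul, integral_add (II01 (f := fun t => x t ^ 4) (cx.pow 4)) (II01 (f := fun t => y t ^ 4) (cy.pow 4)), hNx4, hNy4]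
    have hy4x4 : nL4 y^4 ≤ nL4 x^4 := pow_le_pow_left₀ hNy0 hNle 4
    linarith
  have wkey : nL4 x ^ 4 - nL4 y ^ 4 ≤ 8 * nL4 x ^ 3 * w := by
    have hsub : nL4 x ^ 4 - nL4 y ^ 4 = ∫ t in (0:ℝ)..1, (x t^4 - y t^4) := by
      rw [hNx4, hNy4, integral_sub (II01 (f := fun t => x t ^ 4) (cx.pow 4)) (II01 (f := fun t => y t ^ 4) (cy.pow 4))]
    have hmono : (∫ t in (0:ℝ)..1, (x t^4 - y t^4))
        ≤ ∫ t in (0:ℝ)..1, |x t - y t| * (|x t| + |y t|)^3 := by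
      refine integral_mono_on zero_le_one (II01 ((cx.pow 4).sub (cy.pow 4)))
        (II01 (cu.abs.mul ((cx.abs.add cy.abs).pow 3))) ?_
      intro t _
      exact pow4_diff _ _
    have hpq : (4:ℝ).HolderConjugate (4/3) := Real.holderConjugate_iff.2 ⟨by norm_num, by norm_num⟩
    have hhold := holder_ab zero_le_one hpq cu.abs ((cx.abs.add cy.abs).pow 3)
      (fun t _ => abs_nonneg _) (fun t _ => by simp only [Pi.pow_apply, Pi.add_apply]; positivity)
    simp only [Pi.pow_apply, Pi.add_apply] at hhold
    have eA : (∫ t in (0:ℝ)..1, |x t - y t| ^ (4:ℝ)) = W4 := by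
      rw [hW4def]; exact integral_congr fun t _ => abs_rpow_four _
    have eB : (∫ t in (0:ℝ)..1, ((|x t| + |y t|)^3) ^ ((4:ℝ)/3))
        = ∫ t in (0:ℝ)..1, (|x t| + |y t|)^4 :=
      integral_congr fun t _ => cube_rpow _ (by positivity)
    rw [eA, eB] at hhold
    have habs0 : 0 ≤ ∫ t in (0:ℝ)..1, (|x t| + |y t|)^4 :=
      intervalIntegral.integral_nonneg zero_le_one (fun t _ => by positivity)
    have habs4 : (∫ t in (0:ℝ)..1, (|x t| + |y t|)^4) ≤ 16 * nL4 x^4 := by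
      have h8 : (∫ t in (0:ℝ)..1, (|x t| + |y t|)^4) ≤ ∫ t in (0:ℝ)..1, 8 * (x t^4 + y t^4) := by
        refine integral_mono_on zero_le_one (II01 ((cx.abs.add cy.abs).pow 4))
          (II01 (continuousOn_const.mul ((cx.pow 4).add (cy.pow 4)))) ?_
        intro t _
        have := pow4_add |x t| |y t|
        rwa [show |x t|^4 = x t^4 from by rw [← abs_pow]; exact abs_of_nonneg (by positivity),
          show |y t|^4 = y t^4 from by rw [← abs_pow]; exact abs_of_nonneg (by positivity)] at this
      have hval : (∫ t in (0:ℝ)..1, 8 * (x t^4 + y t^4)) = 8 * (nL4 x^4 + nL4 y^4) := by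
        rw [intervalIntegral.integral_const_mul, integral_add (II01 (f := fun t => x t ^ 4) (cx.pow 4)) (II01 (f := fun t => y t ^ 4) (cy.pow 4)), hNx4, hNy4]
      have hy4x4 : nL4 y^4 ≤ nL4 x^4 := pow_le_pow_left₀ hNy0 hNle 4
      linarith
    have hrpow : (∫ t in (0:ℝ)..1, (|x t| + |y t|)^4) ^ ((1:ℝ)/(4/3)) ≤ 8 * nL4 x ^ 3 := by
      rw [show (1:ℝ)/(4/3) = 3/4 from by norm_num]
      calc (∫ t in (0:ℝ)..1, (|x t| + |y t|)^4) ^ ((3:ℝ)/4)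
          ≤ (16 * nL4 x^4) ^ ((3:ℝ)/4) := Real.rpow_le_rpow habs0 habs4 (by norm_num)
        _ = ((2 * nL4 x)^4) ^ ((3:ℝ)/4) := by rw [show (16:ℝ) * nL4 x^4 = (2*nL4 x)^4 from by ring]
        _ = (2 * nL4 x)^3 := quad_rpow _ (by positivity)
        _ = 8 * nL4 x^3 := by ring
    calc nL4 x ^ 4 - nL4 y ^ 4 = ∫ t in (0:ℝ)..1, (x t^4 - y t^4) := hsub
      _ ≤ ∫ t in (0:ℝ)..1, |x t - y t| * (|x t| + |y t|)^3 := hmono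
      _ ≤ W4 ^ ((1:ℝ)/4) * (∫ t in (0:ℝ)..1, (|x t| + |y t|)^4) ^ ((1:ℝ)/(4/3)) := hhold
      _ ≤ W4 ^ ((1:ℝ)/4) * (8 * nL4 x ^ 3) := mul_le_mul_of_nonneg_left hrpow (Real.rpow_nonneg hW0 _)
      _ = 8 * nL4 x ^ 3 * w := by rw [hwdef]; ring
  have hBm : |mR x - mR y| * nL4 y ^ 2 ≤ 8*(R*w) := by
    rw [hmR x, hmR y]
    exact Bbound hR hNy0 hNle hw0 wkey
  -- Term 2
  have hgdx : ∀ ξ ∈ Icc (0:ℝ) 1, HasDerivAt (fun t => mR x * x t^2) (mR x * (2 * x ξ * x' ξ)) ξ := by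
    intro ξ hξ
    have h := ((hx ξ hξ).pow 2).const_mul (mR x)
    simpa using h
  have hgdy : ∀ ξ ∈ Icc (0:ℝ) 1, HasDerivAt (fun t => mR y * y t^2) (mR y * (2 * y ξ * y' ξ)) ξ := by
    intro ξ hξ
    have h := ((hy ξ hξ).pow 2).const_mul (mR y)
    simpa using h
  have cG : ContinuousOn (fun t => mR x * x t^2 - mR y * y t^2) (Icc (0:ℝ) 1) :=
    (continuousOn_const.mul (cx.pow 2)).sub (continuousOn_const.mul (cy.pow 2))
  have cG' : ContinuousOn (fun ξ => mR x * (2 * x ξ * x' ξ) - mR y * (2 * y ξ * y' ξ)) (Icc (0:ℝ) 1) :=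
    (continuousOn_const.mul ((continuousOn_const.mul cx).mul cx')).sub
      (continuousOn_const.mul ((continuousOn_const.mul cy).mul cy'))
  have hT2 : (∫ ξ in (0:ℝ)..1,
        (deriv (fun t => mR x * x t ^ 2) ξ - deriv (fun t => mR y * y t ^ 2) ξ) *
          (x ξ - y ξ)) =
      -∫ t in (0:ℝ)..1, (x' t - y' t) * (mR x * x t ^ 2 - mR y * y t ^ 2) := by
    have hT2eq : (∫ ξ in (0:ℝ)..1,
          (deriv (fun t => mR x * x t ^ 2) ξ - deriv (fun t => mR y * y t ^ 2) ξ) *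
            (x ξ - y ξ))
        = ∫ ξ in (0:ℝ)..1, (x ξ - y ξ) *
            ((mR x * (2 * x ξ * x' ξ)) - (mR y * (2 * y ξ * y' ξ))) := by
      refine integral_congr ?_
      intro ξ hξ
      rw [uIccE] at hξ
      show (deriv (fun t => mR x * x t ^ 2) ξ - deriv (fun t => mR y * y t ^ 2) ξ) *
          (x ξ - y ξ)
        = (x ξ - y ξ) * ((mR x * (2 * x ξ * x' ξ)) - (mR y * (2 * y ξ * y' ξ)))
      rw [(hgdx ξ hξ).deriv, (hgdy ξ hξ).deriv]
      ring
    have ibp2 := integral_mul_deriv_eq_deriv_mul (a := (0:ℝ)) (b := 1)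
      (u := fun t => x t - y t) (u' := fun t => x' t - y' t)
      (v := fun t => mR x * x t^2 - mR y * y t^2)
      (v' := fun ξ => mR x * (2 * x ξ * x' ξ) - mR y * (2 * y ξ * y' ξ))
      (fun t ht => (hx t (uIccE ▸ ht)).sub (hy t (uIccE ▸ ht)))
      (fun t ht => (hgdx t (uIccE ▸ ht)).sub (hgdy t (uIccE ▸ ht)))
      (II01 cu') (II01 cG')
    rw [hT2eq, ibp2]
    simp [hx0, hx1, hy0, hy1]
  have cuG : ContinuousOn (fun t => (x' t - y' t) * (mR x * x t^2 - mR y * y t^2)) (Icc (0:ℝ) 1) :=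
    cu'.mul cG
  have hneg : -(∫ t in (0:ℝ)..1, (x' t - y' t) * (mR x * x t ^ 2 - mR y * y t ^ 2))
      ≤ ∫ t in (0:ℝ)..1, |(x' t - y' t) * (mR x * x t ^ 2 - mR y * y t ^ 2)| := by
    rw [← intervalIntegral.integral_neg]
    refine integral_mono_on zero_le_one (II01 cuG.neg) (II01 cuG.abs) ?_
    intro t _
    exact neg_le_abs _
  have hsqS : Real.sqrt (∫ t in (0:ℝ)..1, |x' t - y' t|^2) = s := by
    rw [show (∫ t in (0:ℝ)..1, |x' t - y' t|^2) = S from by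
      rw [hSdef]; exact integral_congr fun t _ => sq_abs _, hsdef]
  have hsqNx : Real.sqrt (∫ t in (0:ℝ)..1, (x t^2)^2) = nL4 x^2 := by
    rw [show (∫ t in (0:ℝ)..1, (x t^2)^2) = nL4 x^4 from by
      rw [hNx4]; exact integral_congr fun t _ => by ring,
      show (nL4 x^4) = (nL4 x^2)^2 from by ring, Real.sqrt_sq (sq_nonneg _)]
  have hsqNy : Real.sqrt (∫ t in (0:ℝ)..1, (y t^2)^2) = nL4 y^2 := by
    rw [show (∫ t in (0:ℝ)..1, (y t^2)^2) = nL4 y^4 from by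
      rw [hNy4]; exact integral_congr fun t _ => by ring,
      show (nL4 y^4) = (nL4 y^2)^2 from by ring, Real.sqrt_sq (sq_nonneg _)]
  have hcsx : (∫ t in (0:ℝ)..1, |x' t - y' t| * x t^2) ≤ s * nL4 x^2 := by
    have h := cs_ab zero_le_one cu'.abs (cx.pow 2)
    simp only [Pi.pow_apply] at h
    rwa [hsqS, hsqNx] at h
  have hcsy : (∫ t in (0:ℝ)..1, |x' t - y' t| * y t^2) ≤ s * nL4 y^2 := by
    have h := cs_ab zero_le_one cu'.abs (cy.pow 2)
    simp only [Pi.pow_apply] at h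
    rwa [hsqS, hsqNy] at h
  have hI2a : -(∫ t in (0:ℝ)..1, (x' t - y' t) * (mR x * x t ^ 2 - mR y * y t ^ 2))
      ≤ 2*R*(s*w) + 8*(R*w)*s := by
    have hptw : ∀ t ∈ Icc (0:ℝ) 1, |(x' t - y' t) * (mR x * x t^2 - mR y * y t^2)|
        ≤ |x' t - y' t| * (mR x * |(x t + y t) * (x t - y t)|)
          + |x' t - y' t| * (|mR x - mR y| * y t^2) := by
      intro t _
      rw [abs_mul]
      have hG : |mR x * x t^2 - mR y * y t^2|
          ≤ mR x * |(x t + y t) * (x t - y t)| + |mR x - mR y| * y t^2 := by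
        rw [show mR x * x t^2 - mR y * y t^2
            = mR x * ((x t + y t) * (x t - y t)) + (mR x - mR y) * y t^2 from by ring]
        refine (abs_add_le _ _).trans (le_of_eq ?_)
        rw [show |mR x * ((x t + y t) * (x t - y t))|
            = mR x * |(x t + y t) * (x t - y t)| from by rw [abs_mul, abs_of_nonneg hmx0],
          show |(mR x - mR y) * y t ^ 2| = |mR x - mR y| * y t ^ 2 from by
            rw [abs_mul, abs_of_nonneg (sq_nonneg (y t))]]
      calc |x' t - y' t| * |mR x * x t^2 - mR y * y t^2|
          ≤ |x' t - y' t| * (mR x * |(x t + y t) * (x t - y t)| + |mR x - mR y| * y t^2) :=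
            mul_le_mul_of_nonneg_left hG (abs_nonneg _)
        _ = |x' t - y' t| * (mR x * |(x t + y t) * (x t - y t)|)
            + |x' t - y' t| * (|mR x - mR y| * y t^2) := by ring
    have cA : ContinuousOn (fun t => |x' t - y' t| * (mR x * |(x t + y t) * (x t - y t)|))
        (Icc (0:ℝ) 1) :=
      cu'.abs.mul (continuousOn_const.mul ((cx.add cy).mul cu).abs)
    have cB : ContinuousOn (fun t => |x' t - y' t| * (|mR x - mR y| * y t^2)) (Icc (0:ℝ) 1) :=
      cu'.abs.mul (continuousOn_const.mul (cy.pow 2))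
    have hint : (∫ t in (0:ℝ)..1, |(x' t - y' t) * (mR x * x t^2 - mR y * y t^2)|)
        ≤ ∫ t in (0:ℝ)..1, (|x' t - y' t| * (mR x * |(x t + y t) * (x t - y t)|)
            + |x' t - y' t| * (|mR x - mR y| * y t^2)) :=
      integral_mono_on zero_le_one (II01 cuG.abs) (II01 (cA.add cB)) hptw
    have hsplit : (∫ t in (0:ℝ)..1, (|x' t - y' t| * (mR x * |(x t + y t) * (x t - y t)|)
            + |x' t - y' t| * (|mR x - mR y| * y t^2)))
        = mR x * (∫ t in (0:ℝ)..1, |x' t - y' t| * |(x t + y t) * (x t - y t)|)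
          + |mR x - mR y| * (∫ t in (0:ℝ)..1, |x' t - y' t| * y t^2) := by
      rw [integral_add (II01 cA) (II01 cB), ← intervalIntegral.integral_const_mul, ← intervalIntegral.integral_const_mul]
      congr 1
      · exact integral_congr fun t _ => by ring
      · exact integral_congr fun t _ => by ring
    have hinner : (∫ t in (0:ℝ)..1, ((x t + y t) * (x t - y t))^2) ≤ (4*nL4 x^2) * w^2 := by
      have h := cs_ab zero_le_one ((cx.add cy).pow 2) (cu.pow 2)
      simp only [Pi.pow_apply, Pi.add_apply] at h
      rw [show (∫ t in (0:ℝ)..1, ((x t + y t)^2)^2) = ∫ t in (0:ℝ)..1, (x t + y t)^4 from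
        integral_congr fun t _ => by ring] at h
      rw [show (∫ t in (0:ℝ)..1, ((x t - y t)^2)^2) = W4 from by
        rw [hW4def]; exact integral_congr fun t _ => by ring] at h
      rw [show W4 = (w^2)^2 from by rw [← hw4]; ring, Real.sqrt_sq (sq_nonneg _)] at h
      have e3 : Real.sqrt (∫ t in (0:ℝ)..1, (x t + y t)^4) ≤ 4*nL4 x^2 := by
        refine (Real.sqrt_le_sqrt h16).trans (le_of_eq ?_)
        rw [show (16:ℝ) * nL4 x^4 = (4*nL4 x^2)^2 from by ring]
        exact Real.sqrt_sq (by positivity)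
      calc (∫ t in (0:ℝ)..1, ((x t + y t) * (x t - y t))^2)
          = ∫ t in (0:ℝ)..1, (x t + y t)^2 * (x t - y t)^2 :=
            integral_congr fun t _ => by ring
        _ ≤ Real.sqrt (∫ t in (0:ℝ)..1, (x t + y t)^4) * w^2 := h
        _ ≤ (4*nL4 x^2) * w^2 := mul_le_mul_of_nonneg_right e3 (sq_nonneg _)
    have houter : (∫ t in (0:ℝ)..1, |x' t - y' t| * |(x t + y t) * (x t - y t)|)
        ≤ s * (2*nL4 x*w) := by
      have h := cs_ab zero_le_one cu'.abs ((cx.add cy).mul cu).abs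
      rw [hsqS] at h
      simp only [Pi.mul_apply, Pi.add_apply] at h
      rw [show (∫ t in (0:ℝ)..1, |(x t + y t) * (x t - y t)|^2)
          = ∫ t in (0:ℝ)..1, ((x t + y t) * (x t - y t))^2 from
        integral_congr fun t _ => sq_abs _] at h
      have e5 : Real.sqrt (∫ t in (0:ℝ)..1, ((x t + y t) * (x t - y t))^2) ≤ 2*nL4 x*w := by
        refine (Real.sqrt_le_sqrt hinner).trans (le_of_eq ?_)
        rw [show (4*nL4 x^2) * w^2 = (2*nL4 x*w)^2 from by ring]
        exact Real.sqrt_sq (by positivity)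
      exact h.trans (mul_le_mul_of_nonneg_left e5 hs0)
    have hAfin : mR x * (∫ t in (0:ℝ)..1, |x' t - y' t| * |(x t + y t) * (x t - y t)|)
        ≤ 2*R*(s*w) := by
      calc mR x * (∫ t in (0:ℝ)..1, |x' t - y' t| * |(x t + y t) * (x t - y t)|)
          ≤ mR x * (s * (2*nL4 x*w)) := mul_le_mul_of_nonneg_left houter hmx0
        _ = (mR x * nL4 x) * (2*(s*w)) := by ring
        _ ≤ R * (2*(s*w)) := mul_le_mul_of_nonneg_right hmxNx
            (by positivity)
        _ = 2*R*(s*w) := by ring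
    have hBfin : |mR x - mR y| * (∫ t in (0:ℝ)..1, |x' t - y' t| * y t^2)
        ≤ 8*(R*w)*s := by
      calc |mR x - mR y| * (∫ t in (0:ℝ)..1, |x' t - y' t| * y t^2)
          ≤ |mR x - mR y| * (s * nL4 y^2) := mul_le_mul_of_nonneg_left hcsy (abs_nonneg _)
        _ = (|mR x - mR y| * nL4 y^2) * s := by ring
        _ ≤ (8*(R*w)) * s := mul_le_mul_of_nonneg_right hBm hs0
    linarith [hneg, hint, hsplit.le, hAfin, hBfin, hsplit.ge]
  have hI2b : -(∫ t in (0:ℝ)..1, (x' t - y' t) * (mR x * x t ^ 2 - mR y * y t ^ 2))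
      ≤ 2*R^2*s := by
    have hptw : ∀ t ∈ Icc (0:ℝ) 1, |(x' t - y' t) * (mR x * x t^2 - mR y * y t^2)|
        ≤ |x' t - y' t| * (mR x * x t^2) + |x' t - y' t| * (mR y * y t^2) := by
      intro t _
      rw [abs_mul]
      have hG : |mR x * x t^2 - mR y * y t^2| ≤ mR x * x t^2 + mR y * y t^2 := by
        refine (abs_sub _ _).trans (le_of_eq ?_)
        rw [abs_of_nonneg (mul_nonneg hmx0 (sq_nonneg _)),
          abs_of_nonneg (mul_nonneg hmy0 (sq_nonneg _))]
      calc |x' t - y' t| * |mR x * x t^2 - mR y * y t^2|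
          ≤ |x' t - y' t| * (mR x * x t^2 + mR y * y t^2) :=
            mul_le_mul_of_nonneg_left hG (abs_nonneg _)
        _ = |x' t - y' t| * (mR x * x t^2) + |x' t - y' t| * (mR y * y t^2) := by ring
    have cA : ContinuousOn (fun t => |x' t - y' t| * (mR x * x t^2)) (Icc (0:ℝ) 1) :=
      cu'.abs.mul (continuousOn_const.mul (cx.pow 2))
    have cB : ContinuousOn (fun t => |x' t - y' t| * (mR y * y t^2)) (Icc (0:ℝ) 1) :=
      cu'.abs.mul (continuousOn_const.mul (cy.pow 2))
    have hint : (∫ t in (0:ℝ)..1, |(x' t - y' t) * (mR x * x t^2 - mR y * y t^2)|)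
        ≤ ∫ t in (0:ℝ)..1, (|x' t - y' t| * (mR x * x t^2)
            + |x' t - y' t| * (mR y * y t^2)) :=
      integral_mono_on zero_le_one (II01 cuG.abs) (II01 (cA.add cB)) hptw
    have hsplit : (∫ t in (0:ℝ)..1, (|x' t - y' t| * (mR x * x t^2)
            + |x' t - y' t| * (mR y * y t^2)))
        = mR x * (∫ t in (0:ℝ)..1, |x' t - y' t| * x t^2)
          + mR y * (∫ t in (0:ℝ)..1, |x' t - y' t| * y t^2) := by
      rw [integral_add (II01 cA) (II01 cB), ← intervalIntegral.integral_const_mul, ← intervalIntegral.integral_const_mul]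
      congr 1
      · exact integral_congr fun t _ => by ring
      · exact integral_congr fun t _ => by ring
    have hAfin : mR x * (∫ t in (0:ℝ)..1, |x' t - y' t| * x t^2) ≤ R^2 * s := by
      calc mR x * (∫ t in (0:ℝ)..1, |x' t - y' t| * x t^2)
          ≤ mR x * (s * nL4 x^2) := mul_le_mul_of_nonneg_left hcsx hmx0
        _ = (mR x * nL4 x^2) * s := by ring
        _ ≤ R^2 * s := mul_le_mul_of_nonneg_right hmxNx2 hs0
    have hBfin : mR y * (∫ t in (0:ℝ)..1, |x' t - y' t| * y t^2) ≤ R^2 * s := by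
      calc mR y * (∫ t in (0:ℝ)..1, |x' t - y' t| * y t^2)
          ≤ mR y * (s * nL4 y^2) := mul_le_mul_of_nonneg_left hcsy hmy0
        _ = (mR y * nL4 y^2) * s := by ring
        _ ≤ R^2 * s := mul_le_mul_of_nonneg_right hmyNy2 hs0
    linarith [hneg, hint, hsplit.le, hAfin, hBfin]
  have hMhalf : M ^ ((1:ℝ)/2) = m := by
    rw [hmdef, Real.sqrt_eq_rpow]
  rw [eT1, hT2, hMhalf, ← hs2, ← hm2]
  rcases le_or_gt m 1 with hm1 | hm1
  · linarith [hI2a, final_small hR hs0 hm0 hw0 hw2sm hm1]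
  · have h4M : 4*m^2 ≤ s^2 := by rw [hs2, hm2]; exact hMS
    linarith [hI2b, final_big hR hs0 hm0 h4M hm1.le]

/-- One-sided dissipativity of the cut-off Burgers drift: with `F_R(x) = m_R(x)·x²`,
`m_R(x) = 1` if `|x|_{L⁴} ≤ R` and `m_R(x) = R²/|x|²_{L⁴}` otherwise, there is `c_R > 0`
such that for all `C²` functions `x, y` on `[0,1]` vanishing at the endpoints,
`∫₀¹ (x''−y'')(x−y) + ∫₀¹ ((F_R x)' − (F_R y)')(x−y)
  ≤ −(π²/4) ∫₀¹ (x−y)² + c_R (∫₀¹ (x−y)²)^{1/2}`. -/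
theorem stmt12 (R : ℝ) (hR : 0 < R)
    (nL4 : (ℝ → ℝ) → ℝ)
    (hnL4 : ∀ x : ℝ → ℝ, nL4 x = (∫ ξ in (0:ℝ)..1, x ξ ^ 4) ^ ((1:ℝ)/4))
    (mR : (ℝ → ℝ) → ℝ)
    (hmR : ∀ x : ℝ → ℝ, mR x = if nL4 x ≤ R then 1 else R ^ 2 / nL4 x ^ 2) :
    ∃ c : ℝ, 0 < c ∧ ∀ x y x' y' x'' y'' : ℝ → ℝ,
      (∀ ξ ∈ Set.Icc (0:ℝ) 1, HasDerivAt x (x' ξ) ξ) →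
      (∀ ξ ∈ Set.Icc (0:ℝ) 1, HasDerivAt x' (x'' ξ) ξ) →
      (∀ ξ ∈ Set.Icc (0:ℝ) 1, HasDerivAt y (y' ξ) ξ) →
      (∀ ξ ∈ Set.Icc (0:ℝ) 1, HasDerivAt y' (y'' ξ) ξ) →
      ContinuousOn x'' (Set.Icc (0:ℝ) 1) → ContinuousOn y'' (Set.Icc (0:ℝ) 1) →
      x 0 = 0 → x 1 = 0 → y 0 = 0 → y 1 = 0 →
      (∫ ξ in (0:ℝ)..1, (x'' ξ - y'' ξ) * (x ξ - y ξ)) +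
        (∫ ξ in (0:ℝ)..1,
          (deriv (fun t => mR x * x t ^ 2) ξ - deriv (fun t => mR y * y t ^ 2) ξ) *
            (x ξ - y ξ)) ≤
      -(Real.pi ^ 2 / 4) * (∫ ξ in (0:ℝ)..1, (x ξ - y ξ) ^ 2) +
        c * (∫ ξ in (0:ℝ)..1, (x ξ - y ξ) ^ 2) ^ ((1:ℝ)/2) := by
  refine ⟨5004*R^4+4, by positivity, ?_⟩
  intro x y x' y' x'' y'' hx hx' hy hy' hx'' hy'' hx0 hx1 hy0 hy1
  rcases le_total (nL4 y) (nL4 x) with h | h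
  · exact key R hR nL4 hnL4 mR hmR x y x' y' x'' y'' hx hx' hy hy' hx'' hy'' hx0 hx1 hy0 hy1 h
  · have hk := key R hR nL4 hnL4 mR hmR y x y' x' y'' x''
      hy hy' hx hx' hy'' hx'' hy0 hy1 hx0 hx1 h
    have e1 : (∫ ξ in (0:ℝ)..1, (y'' ξ - x'' ξ) * (y ξ - x ξ))
        = ∫ ξ in (0:ℝ)..1, (x'' ξ - y'' ξ) * (x ξ - y ξ) :=
      integral_congr fun ξ _ => by ring
    have e2 : (∫ ξ in (0:ℝ)..1,
          (deriv (fun t => mR y * y t ^ 2) ξ - deriv (fun t => mR x * x t ^ 2) ξ) *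
            (y ξ - x ξ))
        = ∫ ξ in (0:ℝ)..1,
            (deriv (fun t => mR x * x t ^ 2) ξ - deriv (fun t => mR y * y t ^ 2) ξ) *
              (x ξ - y ξ) :=
      integral_congr fun ξ _ => by ring
    have e3 : (∫ ξ in (0:ℝ)..1, (y ξ - x ξ) ^ 2) = ∫ ξ in (0:ℝ)..1, (x ξ - y ξ) ^ 2 :=
      integral_congr fun ξ _ => by ring
    rw [e1, e2, e3] at hk
    exact hk
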